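/- Consistent reducibility passes through decompositions: Let (R, W, d) be a filtered presentation of vector spaces over a field K. If a reduction sequence s of degree n decomposes into reduction sequences s′ and s″, and both s′ and s″ are consistently reducible, then s is consistently reducible. -/

import Mathlib

/-- A *filtered presentation of vector spaces* over a field `K`: `K`-vector spaces `R` and `W`,
a basis of `W` indexed by `I` whose elements are called *webs*, together with a degree
function `deg : I → ℕ`, a basis of `R` indexed by `P` whose elements are called *relators*,
and a `K`-linear map `d : R → W` with `d [r] ≠ 0` for every relator `r`. -/
structure FilteredPresentation (K W R I P : Type*) [Field K]
    [AddCommGroup W] [Module K W] [AddCommGroup R] [Module K R] where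
  /-- the basis of webs -/
  web : Module.Basis I K W
  /-- the degree of each web -/
  deg : I → ℕ
  /-- the basis of relators -/
  rel : Module.Basis P K R
  /-- the structure map of the presentation -/
  d : R →ₗ[K] W
  /-- `d` is nonzero on every relator -/
  d_rel_ne_zero : ∀ p : P, d (rel p) ≠ 0

namespace FilteredPresentation

variable {K W R I P : Type*} [Field K]
  [AddCommGroup W] [Module K W] [AddCommGroup R] [Module K R]
  (FP : FilteredPresentation K W R I P)

/-- `FₙW` : the span of the webs of degree at most `n`. -/
def FWle (n : ℕ) : Submodule K W :=
  Submodule.span K ((fun i => FP.web i) '' {i | FP.deg i ≤ n})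

/-- `Fₙ₋₁W` : the span of the webs of degree strictly less than `n`
(so its value at `n = 0` is `F₋₁W = 0`). -/
def FWlt (n : ℕ) : Submodule K W :=
  Submodule.span K ((fun i => FP.web i) '' {i | FP.deg i < n})

/-- The degree `|r|` of a relator: the least `n` such that `d [r] ∈ FₙW`. -/
noncomputable def rdeg (p : P) : ℕ :=
  sInf {n : ℕ | FP.d (FP.rel p) ∈ FP.FWle n}

/-- `Fₙ₋₁R` : the span of the relators of degree strictly less than `n`. -/
def FRlt (n : ℕ) : Submodule K R :=
  Submodule.span K ((fun p => FP.rel p) '' {p | FP.rdeg p < n})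

/-- The *leading term* at filtration level `n` of an element `x` of `R`: the class of `d x`
in `W ⧸ Fₙ₋₁W`.  (For a relator of degree `n` this class lies in `grₙW = FₙW/Fₙ₋₁W`,
realized inside the ambient quotient `W ⧸ Fₙ₋₁W`.) -/
def lead (n : ℕ) (x : R) : W ⧸ FP.FWlt n :=
  (FP.FWlt n).mkQ (FP.d x)

/-- A relator is a *reduction relator* if its leading term is the class of a single web
(necessarily of degree `|r|`). -/
def IsReductionRel (p : P) : Prop :=
  ∃ i : I, FP.deg i = FP.rdeg p ∧
    FP.lead (FP.rdeg p) (FP.rel p) = (FP.FWlt (FP.rdeg p)).mkQ (FP.web i)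

/-- A relator is a *horizontal relator* if its leading term is the difference `u - v` of the
classes of two distinct webs (necessarily of degree `|r|`). -/
def IsHorizontalRel (p : P) : Prop :=
  ∃ i j : I, i ≠ j ∧ FP.deg i = FP.rdeg p ∧ FP.deg j = FP.rdeg p ∧
    FP.lead (FP.rdeg p) (FP.rel p) =
      (FP.FWlt (FP.rdeg p)).mkQ (FP.web i) - (FP.FWlt (FP.rdeg p)).mkQ (FP.web j)

/-- A *canceling sequence* of degree `n`: a (nonempty) finite sequence `s₁, …, s_m` of
signed relators of degree `n` (each `sᵢ` is `±[r]` for a relator `r` of degree `n`),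
together with elements `w₀, w₁, …, w_m` of `W ⧸ Fₙ₋₁W`, each either `0` or the class of a
single web of degree `n`, with `w₁, …, w_{m-1}` nonzero, `w₀ = w_m`, and such that the
leading term of `sᵢ` is `wᵢ - wᵢ₋₁` for all `i`. -/
structure CancelingSeq (n : ℕ) where
  /-- the underlying list `s₁, …, s_m` of signed relators -/
  s : List R
  /-- the witnessing list `w₀, w₁, …, w_m` -/
  w : List (W ⧸ FP.FWlt n)
  nonempty : 0 < s.length
  len : w.length = s.length + 1
  signed : ∀ x ∈ s, ∃ p : P, (x = FP.rel p ∨ x = -FP.rel p) ∧ FP.rdeg p = n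
  w_mem : ∀ u ∈ w, u = 0 ∨ ∃ i : I, FP.deg i = n ∧ u = (FP.FWlt n).mkQ (FP.web i)
  w_mid_ne : ∀ k : ℕ, 0 < k → k < s.length → w.getD k 0 ≠ 0
  w_cycle : w.getD 0 0 = w.getD s.length 0
  lead_step : ∀ k < s.length,
    FP.lead n (s.getD k 0) = w.getD (k + 1) 0 - w.getD k 0

namespace CancelingSeq

variable {FP} {n : ℕ}

/-- `Σs` : the sum `s₁ + ⋯ + s_m ∈ R` of the signed relators of a canceling sequence. -/
def total (c : FP.CancelingSeq n) : R := c.s.sum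

/-- A canceling sequence is a *reduction sequence* if `w₀ = w_m = 0`. -/
def IsReductionSeq (c : FP.CancelingSeq n) : Prop :=
  c.w.getD 0 0 = 0 ∧ c.w.getD c.s.length 0 = 0

/-- A canceling sequence is a *horizontal sequence* if it is not a reduction sequence. -/
def IsHorizontalSeq (c : FP.CancelingSeq n) : Prop :=
  ¬ c.IsReductionSeq

/-- A canceling sequence `s` of degree `n` is *consistently reducible* if there exists
`y ∈ Fₙ₋₁R` with `d y = d (Σs)`. -/
def ConsistentlyReducible (c : FP.CancelingSeq n) : Prop :=
  ∃ y ∈ FP.FRlt n, FP.d y = FP.d c.total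

end CancelingSeq

/-- The presentation is *E¹-convergent* (its associated two-column spectral sequence
converges at the first page) if for every `n ∈ ℕ` and every `x` in the span of the
relators of degree exactly `n` with `d x ∈ Fₙ₋₁W`, there exists `y ∈ Fₙ₋₁R` with
`d y = d x`. -/
def E1Convergent : Prop :=
  ∀ n : ℕ, ∀ x ∈ Submodule.span K ((fun p => FP.rel p) '' {p | FP.rdeg p = n}),
    FP.d x ∈ FP.FWlt n → ∃ y ∈ FP.FRlt n, FP.d y = FP.d x

end FilteredPresentation

namespace FilteredPresentation.CancelingSeq

variable {K W R I P : Type*} [Field K]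
  [AddCommGroup W] [Module K W] [AddCommGroup R] [Module K R]
  {FP : FilteredPresentation K W R I P} {n : ℕ}

/-- Two canceling sequences `s` and `s′` of the same degree `n` are *equivalent* if there
exists `y ∈ Fₙ₋₁R` with `d y = d (Σs − Σs′)`. -/
def Equivalent (c c' : FP.CancelingSeq n) : Prop :=
  ∃ y ∈ FP.FRlt n, FP.d y = FP.d (c.total - c'.total)

/-- A reduction sequence `s` of degree `n` *decomposes into* reduction sequences `s′` and
`s″` if there exist a reduction sequence `t = (t₁, …, t_m)` of degree `n` equivalent to `s`,
an index `1 ≤ k < m`, and a signed relator `ρ` of degree `n` whose underlying relator is a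
reduction relator, such that `s′ = (t₁, …, t_k, ρ)` and `s″ = (−ρ, t_{k+1}, …, t_m)` are
both reduction sequences of degree `n`. -/
def DecomposesInto (c c' c'' : FP.CancelingSeq n) : Prop :=
  ∃ (t : FP.CancelingSeq n) (k : ℕ) (ρ : R),
    t.IsReductionSeq ∧ c.Equivalent t ∧
    1 ≤ k ∧ k < t.s.length ∧
    (∃ p : P, (ρ = FP.rel p ∨ ρ = -FP.rel p) ∧ FP.rdeg p = n ∧ FP.IsReductionRel p) ∧
    c'.s = t.s.take k ++ [ρ] ∧
    c''.s = -ρ :: t.s.drop k ∧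
    c'.IsReductionSeq ∧ c''.IsReductionSeq

end FilteredPresentation.CancelingSeq

/-- **Consistent reducibility passes through decompositions.**
Let `(R, W, d)` be a filtered presentation of vector spaces over a field `K`.  If a
reduction sequence `s` of degree `n` decomposes into reduction sequences `s′` and `s″`, and
both `s′` and `s″` are consistently reducible, then `s` is consistently reducible. -/
theorem FilteredPresentation.CancelingSeq.consistentlyReducible_of_decomposesInto
    {K W R I P : Type*} [Field K]
    [AddCommGroup W] [Module K W] [AddCommGroup R] [Module K R]
    {FP : FilteredPresentation K W R I P} {n : ℕ}
    (c c' c'' : FP.CancelingSeq n)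
    (hc : c.IsReductionSeq)
    (hdec : c.DecomposesInto c' c'')
    (h' : c'.ConsistentlyReducible) (h'' : c''.ConsistentlyReducible) :
    c.ConsistentlyReducible := by
  obtain ⟨t, k, ρ, ht, ⟨y, hy, hdy⟩, hk1, hk2, hρ, hs', hs'', hr', hr''⟩ := hdec
  obtain ⟨y', hy', hdy'⟩ := h'
  obtain ⟨y'', hy'', hdy''⟩ := h''
  have htot : c'.total + c''.total = t.total := by
    simp only [total, hs', hs'', List.sum_append, List.sum_cons, List.sum_nil]
    conv_rhs => rw [← List.take_append_drop k t.s, List.sum_append]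
    abel
  refine ⟨y + y' + y'', add_mem (add_mem hy hy') hy'', ?_⟩
  have hthis : FP.d c.total = FP.d y + FP.d t.total := by
    rw [map_sub] at hdy; rw [hdy]; abel
  rw [map_add, map_add, hthis, ← htot, map_add, hdy', hdy'', add_assoc]
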